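/- For all positive integers n, s, p, one has min(n·s, p) ≤ min(n, p) · min(s, p + 1 − min(n, p)). -/

import Mathlib

/-- For all positive integers n, s, p:
    min(n·s, p) ≤ min(n, p) · min(s, p + 1 − min(n, p)). -/
theorem stmt_0 (n s p : ℕ) (hn : 0 < n) (hs : 0 < s) (hp : 0 < p) :
    min (n * s) p ≤ min n p * min s (p + 1 - min n p) := by
  rcases le_total n p with h | h
  · rw [min_eq_left h]
    rcases le_total s (p + 1 - n) with hs' | hs'
    · rw [min_eq_left hs']
      exact min_le_left _ _
    · rw [min_eq_right hs']
      calc min (n * s) p ≤ p := min_le_right _ _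
        _ ≤ n * (p + 1 - n) := by nlinarith [Nat.sub_add_cancel (by omega : n ≤ p + 1)]
  · rw [min_eq_right h]
    have : p + 1 - p = 1 := by omega
    rw [this, min_eq_right (by omega : 1 ≤ s)]
    calc min (n * s) p ≤ p := min_le_right _ _
      _ ≤ p * 1 := by omega
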